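/- Let θ be an irrational real number which is not Diophantine, i.e. for all c > 0 and k > 0 there exist an integer p and a positive integer q with |qθ − p| < c/qᵏ. Then there exists a smooth 1-periodic function h : ℝ → ℝ with ∫₀¹ h(t) dt = 0 such that no smooth 1-periodic function ψ : ℝ → ℝ satisfies ψ(z + θ) − ψ(z) = h(z) for all z ∈ ℝ. -/

import Mathlib

open Real MeasureTheory intervalIntegral

namespace Kolm5




lemma abs_exp_I_sub_one (x : ℝ) :
    ‖Complex.exp (x * Complex.I) - 1‖ ≤ |x| := by
  have hre : (Complex.exp (x * Complex.I) - 1).re = Real.cos x - 1 := by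
    simp [Complex.exp_ofReal_mul_I_re]
  have him : (Complex.exp (x * Complex.I) - 1).im = Real.sin x := by
    simp [Complex.exp_ofReal_mul_I_im]
  rw [Complex.norm_def, Complex.normSq_apply, hre, him]
  have h2 : (Real.cos x - 1) * (Real.cos x - 1) + Real.sin x * Real.sin x
      = 2 - 2 * Real.cos x := by
    have := Real.sin_sq_add_cos_sq x; nlinarith
  have h3 : 2 - 2 * Real.cos x ≤ x ^ 2 := by
    have := Real.one_sub_sq_div_two_le_cos (x := x); nlinarith
  rw [h2]
  calc Real.sqrt (2 - 2 * Real.cos x) ≤ Real.sqrt (x ^ 2) := Real.sqrt_le_sqrt h3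
    _ = |x| := Real.sqrt_sq_eq_abs x

lemma round_min (x : ℝ) (p : ℤ) : |x - round x| ≤ |x - p| := by
  rcases eq_or_ne p (round x) with h | h
  · rw [h]
  · have h0 : (1:ℤ) ≤ |p - round x| := Int.one_le_abs (sub_ne_zero.2 h)
    have h1 : (1:ℝ) ≤ |(p:ℝ) - (round x : ℤ)| := by
      have : ((1:ℤ):ℝ) ≤ ((|p - round x| : ℤ) : ℝ) := by exact_mod_cast h0
      exact_mod_cast this
    have ht : |(p:ℝ) - ((round x : ℤ):ℝ)| ≤ |x - round x| + |x - p| := by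
      have he : (p:ℝ) - ((round x : ℤ):ℝ) = (x - round x) - (x - p) := by ring
      rw [he]
      exact abs_sub _ _
    have hr := abs_sub_round x
    linarith

lemma int_exp_int (r : ℤ) :
    ∫ t in (0:ℝ)..1, Complex.exp ((2 * π * (r:ℝ) : ℝ) * Complex.I * t)
      = if r = 0 then 1 else 0 := by
  rcases eq_or_ne r 0 with hr | hr
  · simp [hr]
  · have hc : ((2 * π * (r:ℝ) : ℝ) : ℂ) * Complex.I ≠ 0 := by
      simp only [ne_eq, mul_eq_zero, Complex.I_ne_zero, or_false, Complex.ofReal_eq_zero]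
      push_neg
      refine ⟨⟨two_ne_zero, Real.pi_ne_zero⟩, ?_⟩
      exact_mod_cast hr
    rw [integral_exp_mul_complex hc]
    have h1 : ((2 * π * (r:ℝ) : ℝ) : ℂ) * Complex.I = (r:ℂ) * (2 * (π:ℂ) * Complex.I) := by
      push_cast; ring
    simp only [Complex.ofReal_one, mul_one, Complex.ofReal_zero, mul_zero, Complex.exp_zero]
    rw [h1, Complex.exp_int_mul_two_pi_mul_I]
    simp [hr]




lemma contDiff_cos_affine (b c : ℝ) : ContDiff ℝ (⊤:ℕ∞) (fun t : ℝ => Real.cos (b * t + c)) :=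
  Real.contDiff_cos.comp ((contDiff_const.mul contDiff_id).add contDiff_const)

lemma iteratedDeriv_amul_cos (b : ℝ) : ∀ (k : ℕ) (A c : ℝ),
    iteratedDeriv k (fun t => A * Real.cos (b * t + c))
      = fun x => A * b ^ k * Real.cos (b * x + (c + k * (π / 2))) := by
  intro k
  induction k with
  | zero => intro A c; funext x; simp
  | succ n ih =>
    intro A c
    have hderiv : (deriv fun t => A * Real.cos (b * t + c))
        = fun t => (A * b) * Real.cos (b * t + (c + π / 2)) := by
      funext x
      have h1 : HasDerivAt (fun t : ℝ => b * t + c) b x := by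
        simpa using ((hasDerivAt_id x).const_mul b).add_const c
      rw [(h1.cos.const_mul A).deriv,
        show b * x + (c + π / 2) = (b * x + c) + π / 2 by ring, Real.cos_add_pi_div_two]
      ring
    rw [iteratedDeriv_succ', hderiv, ih (A * b) (c + π/2)]
    funext x
    have harg : b * x + (c + π / 2 + n * (π / 2)) = b * x + (c + (n + 1 : ℕ) * (π / 2)) := by
      push_cast; ring
    rw [harg]
    ring

lemma norm_iteratedFDeriv_amul_cos (A b : ℝ) (k : ℕ) (x : ℝ) :
    ‖iteratedFDeriv ℝ k (fun t => A * Real.cos (b * t)) x‖ ≤ |A| * |b| ^ k := by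
  rw [norm_iteratedFDeriv_eq_norm_iteratedDeriv]
  have h0 : (fun t : ℝ => A * Real.cos (b * t)) = fun t => A * Real.cos (b * t + 0) := by
    funext t; rw [add_zero]
  rw [h0, iteratedDeriv_amul_cos b k A 0]
  rw [Real.norm_eq_abs, abs_mul, abs_mul, abs_pow]
  have h2 := Real.abs_cos_le_one (b * x + (0 + k * (π / 2)))
  have h1 : (0:ℝ) ≤ |A| * |b| ^ k := by positivity
  nlinarith [abs_nonneg (Real.cos (b * x + (0 + k * (π / 2))))]




lemma exists_qp (θ : ℝ) (hirr : Irrational θ)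
    (hθ : ∀ c : ℝ, 0 < c → ∀ k : ℝ, 0 < k →
      ∃ (p : ℤ) (q : ℕ), 0 < q ∧ |(q : ℝ) * θ - (p : ℝ)| < c / (q : ℝ) ^ k)
    (j : ℕ) :
    ∃ (q : ℕ) (p : ℤ), 2 ^ j < q ∧ |(q : ℝ) * θ - p| < ((q:ℝ) ^ (j + 2))⁻¹ := by
  set N := 2 ^ j with hN
  have hN1 : 1 ≤ N := Nat.one_le_two_pow
  have hne : (Finset.Icc 1 N).Nonempty := ⟨1, Finset.mem_Icc.2 ⟨le_refl 1, hN1⟩⟩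
  set ε := (Finset.Icc 1 N).inf' hne (fun m => |(m:ℝ) * θ - round ((m:ℝ) * θ)|) with hε
  have hεpos : 0 < ε := by
    rw [hε, Finset.lt_inf'_iff]
    intro m hm
    have hm1 : m ≠ 0 := by
      have := (Finset.mem_Icc.1 hm).1; omega
    have hi : Irrational ((m:ℝ) * θ) := hirr.natCast_mul hm1
    exact abs_pos.2 (sub_ne_zero.2 (hi.ne_int (round ((m:ℝ) * θ))))
  obtain ⟨p, q, hq0, hlt⟩ := hθ (min ε 1) (lt_min hεpos one_pos) ((j:ℝ) + 2) (by positivity)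
  have hq1 : (1:ℝ) ≤ (q:ℝ) := by exact_mod_cast hq0
  have hpow1 : (1:ℝ) ≤ (q:ℝ) ^ ((j:ℝ) + 2) := Real.one_le_rpow hq1 (by positivity)
  have hqN : N < q := by
    by_contra hle
    push_neg at hle
    have hmem : q ∈ Finset.Icc 1 N := Finset.mem_Icc.2 ⟨hq0, hle⟩
    have h1 : ε ≤ |(q:ℝ) * θ - round ((q:ℝ) * θ)| := Finset.inf'_le _ hmem
    have h2 : |(q:ℝ) * θ - round ((q:ℝ) * θ)| ≤ |(q:ℝ) * θ - p| := round_min _ _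
    have h3 : min ε 1 / (q:ℝ) ^ ((j:ℝ) + 2) ≤ min ε 1 :=
      div_le_self (le_of_lt (lt_min hεpos one_pos)) hpow1
    have h4 := min_le_left ε 1
    linarith
  refine ⟨q, p, hqN, ?_⟩
  have hqpos : (0:ℝ) < (q:ℝ) := by linarith
  have key : (q:ℝ) ^ ((j:ℝ) + 2) = (q:ℝ) ^ (j + 2) := by
    rw [← Real.rpow_natCast (q:ℝ) (j + 2)]
    norm_num
  have hrpos : (0:ℝ) < (q:ℝ) ^ ((j:ℝ) + 2) := by linarith
  calc |(q:ℝ) * θ - p| < min ε 1 / (q:ℝ) ^ ((j:ℝ) + 2) := hlt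
    _ ≤ 1 / (q:ℝ) ^ ((j:ℝ) + 2) := by
        gcongr
        exact min_le_right _ _
    _ = ((q:ℝ) ^ (j + 2))⁻¹ := by rw [key, one_div]




lemma intervalIntegrable_exp_mul (c : ℂ) :
    IntervalIntegrable (fun t : ℝ => Complex.exp (c * t)) volume 0 1 :=
  (Complex.continuous_exp.comp (continuous_const.mul Complex.continuous_ofReal)).intervalIntegrable 0 1

lemma coeff_cos (m n : ℕ) (hn : 1 ≤ n) :
    ∫ t in (0:ℝ)..1,
        (Real.cos (2 * π * m * t) : ℂ) * Complex.exp ((-(2 * π * n * t) : ℝ) * Complex.I)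
      = if m = n then (1/2 : ℂ) else 0 := by
  have hpt : ∀ t : ℝ, (Real.cos (2 * π * m * t) : ℂ)
        * Complex.exp ((-(2 * π * n * t) : ℝ) * Complex.I)
      = (1/2 : ℂ) * Complex.exp ((2 * π * (((m:ℤ) - n : ℤ) : ℝ) : ℝ) * Complex.I * t)
        + (1/2 : ℂ) * Complex.exp ((2 * π * ((-(m:ℤ) - n : ℤ) : ℝ) : ℝ) * Complex.I * t) := by
    intro t
    have hc : (Real.cos (2 * π * m * t) : ℂ)
        = (Complex.exp (((2 * π * m * t : ℝ) : ℂ) * Complex.I)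
          + Complex.exp (-(((2 * π * m * t : ℝ) : ℂ) * Complex.I))) / 2 := by
      rw [Complex.ofReal_cos, eq_div_iff (two_ne_zero' ℂ)]
      have h := Complex.two_cos (x := ((2 * π * m * t : ℝ) : ℂ))
      rw [neg_mul] at h
      linear_combination h
    have e1 : ((2 * π * (m:ℝ) * t : ℝ) : ℂ) * Complex.I + ((-(2 * π * (n:ℝ) * t) : ℝ) : ℂ) * Complex.I
        = ((2 * π * (((m:ℤ) - n : ℤ) : ℝ) : ℝ) : ℂ) * Complex.I * (t:ℂ) := by push_cast; ring
    have e2 : -(((2 * π * (m:ℝ) * t : ℝ) : ℂ) * Complex.I) + ((-(2 * π * (n:ℝ) * t) : ℝ) : ℂ) * Complex.I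
        = ((2 * π * ((-(m:ℤ) - n : ℤ) : ℝ) : ℝ) : ℂ) * Complex.I * (t:ℂ) := by push_cast; ring
    rw [hc, div_mul_eq_mul_div, add_mul, ← Complex.exp_add, ← Complex.exp_add, e1, e2]
    ring
  rw [intervalIntegral.integral_congr (g := fun t =>
      (1/2 : ℂ) * Complex.exp ((2 * π * (((m:ℤ) - n : ℤ) : ℝ) : ℝ) * Complex.I * t)
        + (1/2 : ℂ) * Complex.exp ((2 * π * ((-(m:ℤ) - n : ℤ) : ℝ) : ℝ) * Complex.I * t))
      (fun t _ => hpt t)]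
  rw [intervalIntegral.integral_add
      ((intervalIntegrable_exp_mul _).const_mul _)
      ((intervalIntegrable_exp_mul _).const_mul _),
    intervalIntegral.integral_const_mul, intervalIntegral.integral_const_mul,
    int_exp_int, int_exp_int]
  rcases eq_or_ne m n with hmn | hmn
  · subst hmn
    simp [show (m:ℤ) - m = 0 by ring, show -(m:ℤ) - m ≠ 0 by omega]
  · simp [show (m:ℤ) - n ≠ 0 by omega, show -(m:ℤ) - n ≠ 0 by omega, hmn]



end Kolm5

/-- Converse part of Kolmogorov's theorem: if `θ` is irrational and not Diophantine,
then there is a smooth 1-periodic function `h` of zero mean such that the cohomological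
equation `ψ (z + θ) - ψ z = h z` has no smooth 1-periodic solution `ψ`. -/
theorem stmt_5 (θ : ℝ) (hirr : Irrational θ)
    (hθ : ∀ c : ℝ, 0 < c → ∀ k : ℝ, 0 < k →
      ∃ (p : ℤ) (q : ℕ), 0 < q ∧ |(q : ℝ) * θ - (p : ℝ)| < c / (q : ℝ) ^ k) :
    ∃ h : ℝ → ℝ, ContDiff ℝ (⊤ : ℕ∞) h ∧ (∀ z : ℝ, h (z + 1) = h z) ∧
      (∫ t in (0:ℝ)..1, h t) = 0 ∧
      ¬ ∃ ψ : ℝ → ℝ, ContDiff ℝ (⊤ : ℕ∞) ψ ∧ (∀ z : ℝ, ψ (z + 1) = ψ z) ∧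
        ∀ z : ℝ, ψ (z + θ) - ψ z = h z := by
  choose q p hq hqp using Kolm5.exists_qp θ hirr hθ
  have hqR : ∀ j, (1:ℝ) ≤ (q j : ℝ) := by
    intro j
    have h1 : 1 ≤ q j := le_trans Nat.one_le_two_pow (hq j).le
    exact_mod_cast h1
  have hq_gt : ∀ j, (2:ℝ) ^ j < (q j : ℝ) := by
    intro j
    have := hq j
    exact_mod_cast this
  set a : ℕ → ℝ := fun j => ((q j : ℝ) ^ (j + 1))⁻¹ with ha
  have hapos : ∀ j, 0 < a j := by
    intro j
    have := hqR j
    rw [ha]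
    positivity
  have habd : ∀ j, a j ≤ (1/2 : ℝ) ^ j := by
    intro j
    have h1 : (2:ℝ) ^ j ≤ (q j : ℝ) ^ (j + 1) :=
      le_trans (hq_gt j).le (le_self_pow₀ (hqR j) (by omega))
    have h2 : (0:ℝ) < (2:ℝ) ^ j := by positivity
    calc a j = ((q j : ℝ) ^ (j + 1))⁻¹ := rfl
      _ ≤ ((2:ℝ) ^ j)⁻¹ := by
          apply inv_anti₀ h2 h1
      _ = (1/2 : ℝ) ^ j := by rw [one_div, inv_pow]
  have hasum : Summable a :=
    Summable.of_nonneg_of_le (fun j => (hapos j).le) habd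
      (summable_geometric_of_lt_one (by norm_num) (by norm_num))
  set g : ℕ → ℝ → ℝ := fun j t => a j * Real.cos (2 * π * (q j) * t) with hg
  set h : ℝ → ℝ := fun t => ∑' j, g j t with hh
  -- uniform bound on iterated derivatives
  have hvb : ∀ k j : ℕ, k ≤ j → a j * (2 * π * (q j)) ^ k ≤ (2 * π) ^ k * (1/2 : ℝ) ^ j := by
    intro k j hkj
    have hqp0 : (0:ℝ) < (q j : ℝ) := by linarith [hqR j]
    have h1 : (2:ℝ) ^ j ≤ (q j : ℝ) ^ (j + 1 - k) :=
      le_trans (hq_gt j).le (le_self_pow₀ (hqR j) (by omega))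
    have hsplit : (q j : ℝ) ^ (j + 1) = (q j : ℝ) ^ k * (q j : ℝ) ^ (j + 1 - k) := by
      rw [← pow_add]
      congr 1
      omega
    have h2 : a j * (q j : ℝ) ^ k ≤ (1/2 : ℝ) ^ j := by
      have h3 : ((q j : ℝ) ^ (j + 1))⁻¹ * (q j : ℝ) ^ k = ((q j : ℝ) ^ (j + 1 - k))⁻¹ := by
        rw [hsplit]
        field_simp
      rw [ha, h3]
      calc ((q j : ℝ) ^ (j + 1 - k))⁻¹ ≤ ((2:ℝ) ^ j)⁻¹ :=
            inv_anti₀ (by positivity) h1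
        _ = (1/2 : ℝ) ^ j := by rw [one_div, inv_pow]
    have hp : (0:ℝ) ≤ (2 * π) ^ k := by positivity
    calc a j * (2 * π * (q j)) ^ k = (2 * π) ^ k * (a j * (q j : ℝ) ^ k) := by
          rw [mul_pow]; ring
      _ ≤ (2 * π) ^ k * (1/2 : ℝ) ^ j := mul_le_mul_of_nonneg_left h2 hp
  have hvsum : ∀ k : ℕ, Summable (fun j => a j * (2 * π * (q j)) ^ k) := by
    intro k
    rw [← summable_nat_add_iff k]
    apply Summable.of_nonneg_of_le
      (fun j => mul_nonneg (hapos _).le (pow_nonneg (by positivity) _))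
      (fun j => ?_)
      (((summable_geometric_of_lt_one (r := (1/2:ℝ)) (by norm_num) (by norm_num))).mul_left
        ((2 * π) ^ k * (1/2 : ℝ) ^ k))
    calc a (j + k) * (2 * π * (q (j + k))) ^ k ≤ (2 * π) ^ k * (1/2 : ℝ) ^ (j + k) :=
          hvb k (j + k) (by omega)
      _ = ((2 * π) ^ k * (1/2 : ℝ) ^ k) * (1/2 : ℝ) ^ j := by rw [pow_add]; ring
  have hgsmooth : ∀ i, ContDiff ℝ (⊤:ℕ∞) (g i) := fun i =>
    contDiff_const.mul (Real.contDiff_cos.comp (contDiff_const.mul contDiff_id))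
  have hsmooth : ContDiff ℝ (⊤:ℕ∞) h := by
    rw [hh]
    apply contDiff_tsum hgsmooth (fun k _ => hvsum k)
    intro k i x _
    have hb := Kolm5.norm_iteratedFDeriv_amul_cos (a i) (2 * π * (q i)) k x
    rwa [abs_of_nonneg (hapos i).le, abs_of_nonneg (by positivity)] at hb
  have hper : ∀ z, h (z + 1) = h z := by
    intro z
    rw [hh]
    refine tsum_congr fun i => ?_
    show a i * Real.cos (2 * π * (q i) * (z + 1)) = a i * Real.cos (2 * π * (q i) * z)
    congr 1
    rw [show 2 * π * (q i : ℝ) * (z + 1) = 2 * π * (q i) * z + (q i) * (2 * π) by ring,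
      Real.cos_add_nat_mul_two_pi]
  have hgcont : ∀ i, Continuous (g i) := fun i => (hgsmooth i).continuous
  have hgbd : ∀ i t, |g i t| ≤ a i := by
    intro i t
    show |a i * Real.cos (2 * π * (q i) * t)| ≤ a i
    rw [abs_mul, abs_of_nonneg (hapos i).le]
    calc a i * |Real.cos (2 * π * (q i) * t)| ≤ a i * 1 :=
          mul_le_mul_of_nonneg_left (Real.abs_cos_le_one _) (hapos i).le
      _ = a i := mul_one _
  -- generic swap lemma for series dominated by `a` over [0,1]
  have hswap : ∀ (F : ℕ → ℝ → ℂ), (∀ i, Continuous (F i)) → (∀ i t, ‖F i t‖ ≤ a i) →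
      ∫ t in Set.Ioc (0:ℝ) 1, (∑' i, F i t) = ∑' i, ∫ t in Set.Ioc (0:ℝ) 1, F i t := by
    intro F hFc hFb
    rw [← MeasureTheory.integral_tsum_of_summable_integral_norm
      (fun i => (hFc i).integrableOn_Ioc) ?_]
    apply Summable.of_nonneg_of_le (fun i => integral_nonneg fun t => norm_nonneg _)
      (fun i => ?_) hasum
    have hle : ∀ t ∈ Set.Ioc (0:ℝ) 1, ‖F i t‖ ≤ a i := fun t _ => hFb i t
    calc ∫ t in Set.Ioc (0:ℝ) 1, ‖F i t‖ ≤ ∫ _t in Set.Ioc (0:ℝ) 1, a i := by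
          apply MeasureTheory.setIntegral_mono_on
            ((hFc i).norm.integrableOn_Ioc)
            (integrableOn_const (by simp [Real.volume_Ioc]))
            measurableSet_Ioc hle
      _ = a i := by simp [Real.volume_Ioc]
  -- mean zero
  have hgint : ∀ i, ∫ t in (0:ℝ)..1, g i t = 0 := by
    intro i
    have hq0 : (0:ℝ) < (q i : ℝ) := by linarith [hqR i]
    have hb : (2 * π * ((q i):ℝ)) ≠ 0 := ne_of_gt (by positivity)
    show ∫ t in (0:ℝ)..1, a i * Real.cos (2 * π * (q i) * t) = 0
    rw [intervalIntegral.integral_const_mul,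
      intervalIntegral.integral_comp_mul_left Real.cos hb, mul_zero, mul_one, integral_cos,
      Real.sin_zero,
      show 2 * π * ((q i):ℝ) = ((2 * (q i) : ℕ):ℝ) * π by push_cast; ring,
      Real.sin_nat_mul_pi]
    simp
  have hmean : ∫ t in (0:ℝ)..1, h t = 0 := by
    have hC : ∀ i, Continuous (fun t => ((g i t : ℝ) : ℂ)) :=
      fun i => Complex.continuous_ofReal.comp (hgcont i)
    have hB : ∀ i t, ‖((g i t : ℝ) : ℂ)‖ ≤ a i := by
      intro i t
      rw [Complex.norm_real, Real.norm_eq_abs]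
      exact hgbd i t
    have h1 : ∫ t in Set.Ioc (0:ℝ) 1, ((h t : ℝ) : ℂ) = 0 := by
      have hpt : ∀ t : ℝ, ((h t : ℝ) : ℂ) = ∑' i, ((g i t : ℝ) : ℂ) := by
        intro t
        rw [hh]
        exact Complex.ofReal_tsum _
      simp only [hpt]
      rw [hswap _ hC hB]
      have hz : ∀ i, ∫ t in Set.Ioc (0:ℝ) 1, ((g i t : ℝ) : ℂ) = 0 := by
        intro i
        rw [← intervalIntegral.integral_of_le zero_le_one,
          intervalIntegral.integral_ofReal, hgint i]
        simp
      simp only [hz, tsum_zero]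
    have h2 : ((∫ t in (0:ℝ)..1, h t : ℝ) : ℂ) = 0 := by
      rw [← intervalIntegral.integral_ofReal, intervalIntegral.integral_of_le zero_le_one]
      exact h1
    exact_mod_cast h2
  refine ⟨h, hsmooth, hper, hmean, ?_⟩
  rintro ⟨ψ, hψs, hψp, hψe⟩
  obtain ⟨C, hC⟩ :=
    (isCompact_Icc (a := (0:ℝ)) (b := 1)).exists_bound_of_continuousOn
      hψs.continuous.continuousOn
  have hC0 : 0 ≤ C := le_trans (norm_nonneg _) (hC 0 (by norm_num))
  have key : ∀ j, (q j : ℝ) ≤ 4 * π * C := by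
    intro j
    set n := q j with hn
    have hn1 : 1 ≤ n := le_trans Nat.one_le_two_pow (hq j).le
    have hq0 : (0:ℝ) < (q j : ℝ) := by linarith [hqR j]
    set En : ℝ → ℂ := fun t => Complex.exp ((-(2 * π * (n:ℝ) * t) : ℝ) * Complex.I) with hEn
    have hEncont : Continuous En := by
      apply Complex.continuous_exp.comp
      exact (Complex.continuous_ofReal.comp ((continuous_const.mul continuous_id).neg)).mul
        continuous_const
    have hEnnorm : ∀ t, ‖En t‖ = 1 := fun t => Complex.norm_exp_ofReal_mul_I _
    set r : ℝ := ∑' i, (if q i = n then a i / 2 else 0) with hr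
    have hrsum : Summable (fun i => if q i = n then a i / 2 else 0) := by
      apply Summable.of_nonneg_of_le (fun i => ?_) (fun i => ?_) hasum
      · split_ifs
        · linarith [hapos i]
        · exact le_rfl
      · split_ifs
        · linarith [hapos i]
        · linarith [hapos i]
    have hrge : a j / 2 ≤ r := by
      have h1 := Summable.le_tsum hrsum j (fun i _ => by
        split_ifs
        · linarith [hapos i]
        · exact le_rfl)
      simpa [← hn] using h1
    -- Fourier coefficient of each g i
    have hFterm : ∀ i, ∫ t in (0:ℝ)..1, ((g i t : ℝ) : ℂ) * En t
        = if q i = n then ((a i : ℂ)) / 2 else 0 := by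
      intro i
      have hpt : ∀ t : ℝ, ((g i t : ℝ) : ℂ) * En t
          = (a i : ℂ) * ((Real.cos (2 * π * (q i) * t) : ℂ)
              * Complex.exp ((-(2 * π * (n:ℝ) * t) : ℝ) * Complex.I)) := by
        intro t
        simp only [hEn, hg]
        push_cast
        ring
      rw [intervalIntegral.integral_congr (fun t _ => hpt t),
        intervalIntegral.integral_const_mul, Kolm5.coeff_cos (q i) n hn1]
      split_ifs
      · ring
      · ring
    -- Fourier coefficient of h
    have hFh : ∫ t in (0:ℝ)..1, ((h t : ℝ) : ℂ) * En t = ((r : ℝ) : ℂ) := by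
      have hC1 : ∀ i, Continuous (fun t => ((g i t : ℝ) : ℂ) * En t) :=
        fun i => (Complex.continuous_ofReal.comp (hgcont i)).mul hEncont
      have hB1 : ∀ i t, ‖((g i t : ℝ) : ℂ) * En t‖ ≤ a i := by
        intro i t
        rw [norm_mul, hEnnorm, mul_one, Complex.norm_real, Real.norm_eq_abs]
        exact hgbd i t
      have hpt : ∀ t : ℝ, ((h t : ℝ) : ℂ) * En t = ∑' i, (((g i t : ℝ) : ℂ) * En t) := by
        intro t
        rw [hh]
        rw [show ((∑' i, g i t : ℝ) : ℂ) = ∑' i, ((g i t : ℝ) : ℂ) from Complex.ofReal_tsum _]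
        exact (tsum_mul_right).symm
      rw [intervalIntegral.integral_of_le zero_le_one]
      simp only [hpt]
      rw [hswap _ hC1 hB1, hr, Complex.ofReal_tsum]
      refine tsum_congr fun i => ?_
      rw [← intervalIntegral.integral_of_le zero_le_one, hFterm i]
      split_ifs
      · push_cast
        ring
      · simp
    -- the ψ side
    set c : ℂ := ((2 * π * (n:ℝ) * θ : ℝ) : ℂ) * Complex.I with hc
    set G : ℝ → ℂ := fun w => ((ψ w : ℝ) : ℂ) * En w with hG
    have hGcont : Continuous G := (Complex.continuous_ofReal.comp hψs.continuous).mul hEncont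
    have hGper : Function.Periodic G 1 := by
      intro w
      simp only [hG, hEn]
      rw [hψp w]
      congr 1
      rw [show ((-(2 * π * (n:ℝ) * (w + 1)) : ℝ) : ℂ) * Complex.I
          = ((-(2 * π * (n:ℝ) * w) : ℝ) : ℂ) * Complex.I
            + ((-(n:ℤ) : ℤ) : ℂ) * (2 * (π:ℂ) * Complex.I) by push_cast; ring,
        Complex.exp_add, Complex.exp_int_mul_two_pi_mul_I, mul_one]
    have hshift : ∫ t in (0:ℝ)..1, ((ψ (t + θ) : ℝ) : ℂ) * En t
        = Complex.exp c * ∫ t in (0:ℝ)..1, G t := by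
      have hptG : ∀ t : ℝ, ((ψ (t + θ) : ℝ) : ℂ) * En t = Complex.exp c * G (t + θ) := by
        intro t
        simp only [hG, hEn, hc]
        have hee : Complex.exp (((2 * π * (n:ℝ) * θ : ℝ) : ℂ) * Complex.I)
            * Complex.exp (((-(2 * π * (n:ℝ) * (t + θ)) : ℝ) : ℂ) * Complex.I)
            = Complex.exp (((-(2 * π * (n:ℝ) * t) : ℝ) : ℂ) * Complex.I) := by
          rw [← Complex.exp_add]
          congr 1
          push_cast
          ring
        rw [← hee]
        ring
      rw [intervalIntegral.integral_congr (fun t _ => hptG t),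
        intervalIntegral.integral_const_mul]
      congr 1
      rw [intervalIntegral.integral_comp_add_right (fun w => G w) θ]
      have hper2 := hGper.intervalIntegral_add_eq θ 0
      rw [zero_add, add_comm (1:ℝ) θ]
      simpa using hper2
    have hint1 : IntervalIntegrable (fun t => ((ψ (t + θ) : ℝ) : ℂ) * En t) volume 0 1 :=
      (((Complex.continuous_ofReal.comp
        (hψs.continuous.comp (continuous_id.add continuous_const))).mul hEncont)).intervalIntegrable 0 1
    have hint2 : IntervalIntegrable G volume 0 1 := hGcont.intervalIntegrable 0 1
    have hsub : ∫ t in (0:ℝ)..1, ((h t : ℝ) : ℂ) * En t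
        = (Complex.exp c - 1) * ∫ t in (0:ℝ)..1, G t := by
      have hpt : ∀ t : ℝ, ((h t : ℝ) : ℂ) * En t
          = ((ψ (t + θ) : ℝ) : ℂ) * En t - ((ψ t : ℝ) : ℂ) * En t := by
        intro t
        rw [← hψe t]
        push_cast
        ring
      rw [intervalIntegral.integral_congr (fun t _ => hpt t),
        intervalIntegral.integral_sub hint1 hint2, hshift]
      have : ∫ t in (0:ℝ)..1, ((ψ t : ℝ) : ℂ) * En t = ∫ t in (0:ℝ)..1, G t := rfl
      rw [this]
      ring
    have hFψbd : ‖∫ t in (0:ℝ)..1, G t‖ ≤ C := by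
      have hb : ∀ x ∈ Set.uIoc (0:ℝ) 1, ‖G x‖ ≤ C := by
        intro x hx
        rw [Set.uIoc_of_le zero_le_one] at hx
        have hx' : x ∈ Set.Icc (0:ℝ) 1 := ⟨hx.1.le, hx.2⟩
        have h1 : ‖G x‖ = ‖ψ x‖ := by
          simp only [hG]
          rw [norm_mul, hEnnorm, mul_one, Complex.norm_real]
        rw [h1]
        exact hC x hx'
      have := intervalIntegral.norm_integral_le_of_norm_le_const hb
      simpa using this
    have hrnn : (0:ℝ) ≤ r := le_trans (by linarith [hapos j]) hrge
    have hexpbd : ‖Complex.exp c - 1‖ ≤ 2 * π * (((q j : ℝ)) ^ (j + 2))⁻¹ := by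
      have hce : c = (((2 * π * ((n:ℝ) * θ - (p j : ℝ)) : ℝ)) : ℂ) * Complex.I
          + ((p j : ℤ) : ℂ) * (2 * (π:ℂ) * Complex.I) := by
        rw [hc]
        push_cast
        ring
      rw [hce, Complex.exp_add, Complex.exp_int_mul_two_pi_mul_I, mul_one]
      calc ‖Complex.exp (((2 * π * ((n:ℝ) * θ - (p j : ℝ)) : ℝ) : ℂ) * Complex.I) - 1‖
          ≤ |2 * π * ((n:ℝ) * θ - (p j : ℝ))| := Kolm5.abs_exp_I_sub_one _
        _ = 2 * π * |(n:ℝ) * θ - (p j : ℝ)| := by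
            rw [abs_mul, abs_of_pos (by positivity : (0:ℝ) < 2 * π)]
        _ ≤ 2 * π * (((q j : ℝ)) ^ (j + 2))⁻¹ := by
            have h2 := (hqp j).le
            exact mul_le_mul_of_nonneg_left h2 (by positivity)
    have hrc : ((r : ℝ) : ℂ) = (Complex.exp c - 1) * ∫ t in (0:ℝ)..1, G t := by
      rw [← hFh, hsub]
    have habs : r ≤ ‖Complex.exp c - 1‖ * C := by
      have h1 : ‖((r : ℝ) : ℂ)‖ = r := by
        rw [Complex.norm_real, Real.norm_eq_abs, abs_of_nonneg hrnn]
      rw [← h1, hrc, norm_mul]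
      apply mul_le_mul_of_nonneg_left ?_ (norm_nonneg _)
      exact hFψbd
    have hfinal : a j / 2 ≤ 2 * π * (((q j : ℝ)) ^ (j + 2))⁻¹ * C :=
      le_trans hrge (le_trans habs (mul_le_mul_of_nonneg_right hexpbd hC0))
    set u : ℝ := (q j : ℝ) ^ (j + 1) with hu
    have hupos : 0 < u := by positivity
    have hq2' : (q j : ℝ) ^ (j + 2) = u * (q j : ℝ) := by rw [hu, ← pow_succ]
    have h3 : (u * (q j : ℝ)) * (a j / 2) ≤ (u * (q j : ℝ)) * (2 * π * (((q j : ℝ)) ^ (j + 2))⁻¹ * C) :=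
      mul_le_mul_of_nonneg_left hfinal (by positivity)
    have h4 : (u * (q j : ℝ)) * (a j / 2) = (q j : ℝ) / 2 := by
      have ha' : a j = u⁻¹ := by simp only [ha, hu]
      rw [ha']
      field_simp
    have h5 : (u * (q j : ℝ)) * (2 * π * (((q j : ℝ)) ^ (j + 2))⁻¹ * C) = 2 * π * C := by
      rw [hq2']
      field_simp
    rw [h4, h5] at h3
    linarith
  obtain ⟨j, hj⟩ := pow_unbounded_of_one_lt (4 * π * C) (one_lt_two (α := ℝ))
  have := key j
  have h2 := hq_gt j
  linarith
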